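/- For every x ≥ 0, the first moment satisfies μ_1^{(α,β)}(x) = (α + 1 + n x)/(n − β). -/

import Mathlib

open MeasureTheory Real Filter

/-- The Szász–Mirakyan basis functions `ψ_{n,k}(x) = e^{-nx} (nx)^k / k!`. -/
noncomputable def psi (n k : ℕ) (x : ℝ) : ℝ :=
  Real.exp (-(n * x)) * (n * x) ^ k / (Nat.factorial k)

/-- The Szász–Mirakyan–Laguerre–Durrmeyer operator `M_n^{(α,β)}`. -/
noncomputable def M (α β : ℝ) (n : ℕ) (f : ℝ → ℝ) (x : ℝ) : ℝ :=
  ∑' k : ℕ, (((n : ℝ) - β) ^ ((k : ℝ) + α + 1) / Real.Gamma ((k : ℝ) + α + 1)) *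
    (∫ t in Set.Ioi (0 : ℝ), f t * t ^ ((k : ℝ) + α) * Real.exp (-((n : ℝ) - β) * t)) *
    psi n k x

/-- The `r`-th moment `μ_r^{(α,β)}(x) = M_n^{(α,β)}[t ↦ t^r](x)`. -/
noncomputable def mu (α β : ℝ) (n : ℕ) (r : ℕ) (x : ℝ) : ℝ :=
  M α β n (fun t => t ^ r) x

lemma integ_eval (α c : ℝ) (hα : -1 < α) (hc : 0 < c) (k : ℕ) :
    (∫ t in Set.Ioi (0 : ℝ), t ^ (1:ℕ) * t ^ ((k : ℝ) + α) * Real.exp (-c * t))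
      = (1 / c) ^ ((k : ℝ) + α + 2) * Real.Gamma ((k : ℝ) + α + 2) := by
  have h1 : (0:ℝ) < (k:ℝ) + α + 2 := by
    have : (0:ℝ) ≤ (k:ℝ) := Nat.cast_nonneg k
    linarith
  rw [← integral_rpow_mul_exp_neg_mul_Ioi h1 hc]
  refine setIntegral_congr_fun measurableSet_Ioi fun t ht => ?_
  have ht' : (0:ℝ) < t := ht
  rw [pow_one, neg_mul]
  have h4 : t ^ ((k:ℝ) + α + 2 - 1) = t * t ^ ((k:ℝ) + α) := by
    rw [show (k:ℝ) + α + 2 - 1 = 1 + ((k:ℝ) + α) by ring, Real.rpow_add ht', Real.rpow_one]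
  rw [h4]

lemma coeff_eval (α c : ℝ) (hα : -1 < α) (hc : 0 < c) (k : ℕ) :
    c ^ ((k:ℝ) + α + 1) / Real.Gamma ((k:ℝ) + α + 1) *
      ((1 / c) ^ ((k : ℝ) + α + 2) * Real.Gamma ((k : ℝ) + α + 2))
      = ((k:ℝ) + α + 1) / c := by
  have h1 : (0:ℝ) < (k:ℝ) + α + 1 := by
    have : (0:ℝ) ≤ (k:ℝ) := Nat.cast_nonneg k
    linarith
  have hG : Real.Gamma ((k:ℝ) + α + 1) ≠ 0 := (Real.Gamma_pos_of_pos h1).ne'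
  have h2 : Real.Gamma ((k:ℝ) + α + 2) = ((k:ℝ) + α + 1) * Real.Gamma ((k:ℝ) + α + 1) := by
    rw [show (k:ℝ) + α + 2 = ((k:ℝ) + α + 1) + 1 by ring, Real.Gamma_add_one h1.ne']
  have h3 : c ^ ((k:ℝ) + α + 1) * (1 / c) ^ ((k : ℝ) + α + 2) = c⁻¹ := by
    rw [one_div, Real.inv_rpow hc.le, ← Real.rpow_neg hc.le, ← Real.rpow_add hc,
      show (k:ℝ) + α + 1 + -((k:ℝ) + α + 2) = -1 by ring, Real.rpow_neg_one]
  calc c ^ ((k:ℝ) + α + 1) / Real.Gamma ((k:ℝ) + α + 1) *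
      ((1 / c) ^ ((k : ℝ) + α + 2) * Real.Gamma ((k : ℝ) + α + 2))
      = (c ^ ((k:ℝ) + α + 1) * (1 / c) ^ ((k : ℝ) + α + 2)) * ((k:ℝ) + α + 1) *
        (Real.Gamma ((k:ℝ) + α + 1) * (Real.Gamma ((k:ℝ) + α + 1))⁻¹) := by
        rw [h2, div_eq_mul_inv]; ring
    _ = c⁻¹ * ((k:ℝ) + α + 1) * 1 := by rw [h3, mul_inv_cancel₀ hG]
    _ = ((k:ℝ) + α + 1) / c := by rw [mul_one, inv_mul_eq_div]


/-- The first moment: `μ_1^{(α,β)}(x) = (α + 1 + n x)/(n − β)`. -/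
theorem stmt_1 (α β : ℝ) (hα : -1 < α) (n : ℕ) (hn : β < n) (x : ℝ) (hx : 0 ≤ x) :
    mu α β n 1 x = (α + 1 + (n : ℝ) * x) / ((n : ℝ) - β) := by
  set c : ℝ := (n : ℝ) - β with hcdef
  have hc : 0 < c := by simp [hcdef]; linarith
  set y : ℝ := (n : ℝ) * x with hy
  have hterm : ∀ k : ℕ,
      (c ^ ((k : ℝ) + α + 1) / Real.Gamma ((k : ℝ) + α + 1)) *
        (∫ t in Set.Ioi (0 : ℝ), (fun t : ℝ => t ^ (1:ℕ)) t * t ^ ((k : ℝ) + α) *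
          Real.exp (-c * t)) * psi n k x
      = (((k:ℝ) + α + 1) / c) * (Real.exp (-y) * (y ^ k / (Nat.factorial k))) := by
    intro k
    have : psi n k x = Real.exp (-y) * (y ^ k / (Nat.factorial k)) := by
      rw [psi, mul_div_assoc]
    rw [this, integ_eval α c hα hc k, mul_assoc (c ^ ((k : ℝ) + α + 1) / Real.Gamma ((k : ℝ) + α + 1))]
    rw [show c ^ ((k : ℝ) + α + 1) / Real.Gamma ((k : ℝ) + α + 1) *
      ((1 / c) ^ ((k : ℝ) + α + 2) * Real.Gamma ((k : ℝ) + α + 2) *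
        (Real.exp (-y) * (y ^ k / ↑(Nat.factorial k))))
      = c ^ ((k:ℝ) + α + 1) / Real.Gamma ((k:ℝ) + α + 1) *
        ((1 / c) ^ ((k : ℝ) + α + 2) * Real.Gamma ((k : ℝ) + α + 2)) *
        (Real.exp (-y) * (y ^ k / ↑(Nat.factorial k))) by ring]
    rw [coeff_eval α c hα hc k]
  have hs0 : Summable (fun k : ℕ => y ^ k / (Nat.factorial k : ℝ)) :=
    Real.summable_pow_div_factorial y
  have hshift : ∀ k : ℕ, ((k:ℝ) + 1) * (y ^ (k+1) / (Nat.factorial (k+1) : ℝ))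
      = y * (y ^ k / (Nat.factorial k : ℝ)) := by
    intro k
    rw [Nat.factorial_succ, pow_succ]
    have hk : (Nat.factorial k : ℝ) ≠ 0 := by positivity
    push_cast
    field_simp
  have hs1 : Summable (fun k : ℕ => (k:ℝ) * (y ^ k / (Nat.factorial k : ℝ))) := by
    rw [← summable_nat_add_iff 1]
    exact (hs0.mul_left y).congr fun k => by push_cast; exact (hshift k).symm
  have t0 : ∑' k : ℕ, y ^ k / (Nat.factorial k : ℝ) = Real.exp y := by
    rw [Real.exp_eq_exp_ℝ, NormedSpace.exp_eq_tsum_div]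
  have t1 : ∑' k : ℕ, (k:ℝ) * (y ^ k / (Nat.factorial k : ℝ)) = y * Real.exp y := by
    rw [Summable.tsum_eq_zero_add hs1]
    simp only [Nat.cast_zero, zero_mul, zero_add]
    rw [tsum_congr fun k : ℕ => by push_cast; exact hshift k, tsum_mul_left, t0]
  have key : mu α β n 1 x
      = ∑' k : ℕ, (((k:ℝ) + α + 1) / c) * (Real.exp (-y) * (y ^ k / (Nat.factorial k))) := by
    rw [mu, M]
    exact tsum_congr hterm
  rw [key]
  have split : ∀ k : ℕ, (((k:ℝ) + α + 1) / c) * (Real.exp (-y) * (y ^ k / (Nat.factorial k)))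
      = (Real.exp (-y) / c) * ((k:ℝ) * (y ^ k / (Nat.factorial k)))
        + ((α + 1) * Real.exp (-y) / c) * (y ^ k / (Nat.factorial k)) := by
    intro k; ring
  rw [tsum_congr split, Summable.tsum_add ((hs1.mul_left _)) ((hs0.mul_left _)),
    tsum_mul_left, tsum_mul_left, t0, t1]
  have hE : Real.exp (-y) * Real.exp y = 1 := by
    rw [← Real.exp_add]; simp
  linear_combination ((α + 1 + y) / c) * hE
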